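/- There exists a constant C, depending only on α, β, p₀, K and θ, with the following property. Let V be a real normed space, a an element of the continuous dual V*, x ∈ V, and let f, b, h be nonnegative real numbers. If (i) 2·a(x) + (p₀−1)·b + θ·‖x‖_V^α ≤ f + K·h², and (ii) ‖a‖_{V*}^{α/(α−1)} ≤ (f + K·‖x‖_V^α)·(1 + h^β), then b ≤ C·(1 + f^{p₀/2} + h^{p₀} + ‖x‖_V^α + ‖x‖_V^α·h^β). -/

import Mathlib

open Real

/-- `f * h ^ β ≤ 1 + f ^ (p₀/2) + h ^ p₀` for suitable exponents. -/
lemma aux_fh {β p₀ f h : ℝ} (hβ : 0 ≤ β) (hp₀ : β + 2 ≤ p₀)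
    (hf : 0 ≤ f) (hh : 0 ≤ h) :
    f * h ^ β ≤ 1 + f ^ (p₀ / 2) + h ^ p₀ := by
  have hp2 : (2:ℝ) ≤ p₀ := by linarith
  have hhp0 : (0:ℝ) ≤ h ^ p₀ := rpow_nonneg hh _
  have hfp0 : (0:ℝ) ≤ f ^ (p₀ / 2) := rpow_nonneg hf _
  have hhb0 : (0:ℝ) ≤ h ^ β := rpow_nonneg hh _
  have hfpow : f ≤ 1 + f ^ (p₀ / 2) := by
    rcases le_total f 1 with h1 | h1
    · linarith
    · have : f ^ (1:ℝ) ≤ f ^ (p₀ / 2) :=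
        rpow_le_rpow_of_exponent_le h1 (by linarith)
      rw [rpow_one] at this; linarith
  rcases le_total h 1 with h1 | h1
  · have hb1 : h ^ β ≤ 1 := rpow_le_one hh h1 hβ
    have : f * h ^ β ≤ f := by nlinarith
    linarith
  · have hh0 : 0 < h := lt_of_lt_of_le one_pos h1
    rcases le_total f (h ^ (2:ℝ)) with hcase | hcase
    · have h2b : f * h ^ β ≤ h ^ (2:ℝ) * h ^ β := by nlinarith
      rw [← rpow_add hh0] at h2b
      have : h ^ (2 + β) ≤ h ^ p₀ :=
        rpow_le_rpow_of_exponent_le h1 (by linarith)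
      linarith
    · -- h ^ 2 ≤ f, so f ≥ 1 and h ^ β ≤ f ^ (β/2)
      have hf1 : (1:ℝ) ≤ f := by
        have : (1:ℝ) ^ (2:ℝ) ≤ h ^ (2:ℝ) := rpow_le_rpow zero_le_one h1 (by norm_num)
        rw [one_rpow] at this; linarith
      have hb : h ^ β ≤ f ^ (β / 2) := by
        have e : (h ^ (2:ℝ)) ^ (β / 2) = h ^ β := by
          rw [← rpow_mul hh]; congr 1; ring
        rw [← e]
        exact rpow_le_rpow (rpow_nonneg hh _) hcase (by linarith)
      have hff : f * h ^ β ≤ f ^ (1 + β / 2) := by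
        rw [rpow_add (by linarith : (0:ℝ) < f), rpow_one]
        nlinarith [rpow_nonneg hf (β/2)]
      have h2 : f ^ (1 + β / 2) ≤ f ^ (p₀ / 2) :=
        rpow_le_rpow_of_exponent_le hf1 (by linarith)
      linarith

/-- Growth bound on `B` induced by the coercivity and growth assumptions
(Remark 2.1 of the paper). -/
theorem stmt_0 (α β p₀ K θ : ℝ) (hα : 1 < α) (hβ : 0 ≤ β) (hp₀ : β + 2 ≤ p₀)
    (hK : 0 ≤ K) (hθ : 0 < θ) :
    ∃ C : ℝ, ∀ (V : Type) (_ : NormedAddCommGroup V) (_ : NormedSpace ℝ V)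
      (a : V →L[ℝ] ℝ) (x : V) (f b h : ℝ),
      0 ≤ f → 0 ≤ b → 0 ≤ h →
      2 * a x + (p₀ - 1) * b + θ * ‖x‖ ^ α ≤ f + K * h ^ 2 →
      ‖a‖ ^ (α / (α - 1)) ≤ (f + K * ‖x‖ ^ α) * (1 + h ^ β) →
      b ≤ C * (1 + f ^ (p₀ / 2) + h ^ p₀ + ‖x‖ ^ α + ‖x‖ ^ α * h ^ β) := by
  set q : ℝ := α / (α - 1) with hq
  have hconj : α.HolderConjugate q := Real.HolderConjugate.conjExponent hα
  have hqone : 1 < q := hconj.symm.lt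
  have hqpos : 0 < q := hconj.symm.pos
  have hp2 : (2:ℝ) ≤ p₀ := by linarith
  refine ⟨(2 + K + 2 ^ q * (2 + 2 * K)) / (p₀ - 1), ?_⟩
  intro V _ _ a x f b h hf hb hh hyp1 hyp2
  set X : ℝ := ‖x‖ ^ α with hX
  have hX0 : 0 ≤ X := rpow_nonneg (norm_nonneg x) _
  set S : ℝ := 1 + f ^ (p₀ / 2) + h ^ p₀ + X + X * h ^ β with hS
  have hfp0 : 0 ≤ f ^ (p₀ / 2) := rpow_nonneg hf _
  have hhp0 : 0 ≤ h ^ p₀ := rpow_nonneg hh _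
  have hhb0 : 0 ≤ h ^ β := rpow_nonneg hh _
  have hXh0 : 0 ≤ X * h ^ β := mul_nonneg hX0 hhb0
  have hfS : f ≤ S := by
    rcases le_total f 1 with h1 | h1
    · rw [hS]; linarith
    · have : f ^ (1:ℝ) ≤ f ^ (p₀ / 2) :=
        rpow_le_rpow_of_exponent_le h1 (by linarith)
      rw [rpow_one] at this; rw [hS]; linarith
  have hh2S : h ^ 2 ≤ S := by
    rcases le_total h 1 with h1 | h1
    · have : h ^ 2 ≤ 1 := by nlinarith
      rw [hS]; linarith
    · have e : h ^ (2:ℝ) ≤ h ^ p₀ := rpow_le_rpow_of_exponent_le h1 hp2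
      rw [show ((2:ℝ)) = ((2:ℕ):ℝ) by norm_num, rpow_natCast] at e
      rw [hS]; linarith
  have hfhS : f * h ^ β ≤ S := by
    have := aux_fh hβ hp₀ hf hh
    rw [hS]; linarith
  have hXS : X ≤ S := by rw [hS]; linarith
  have hXhS : X * h ^ β ≤ S := by rw [hS]; linarith
  -- bound on -2 a x
  have hax : -(2 * a x) ≤ 2 * (‖a‖ * ‖x‖) := by
    have h1 : ‖a x‖ ≤ ‖a‖ * ‖x‖ := a.le_opNorm x
    have h2 : -(a x) ≤ |a x| := neg_le_abs _
    rw [Real.norm_eq_abs] at h1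
    linarith
  -- Young's inequality
  have hyoung : ‖x‖ * (2 * ‖a‖) ≤ X + 2 ^ q * ‖a‖ ^ q := by
    have hy := Real.young_inequality_of_nonneg (norm_nonneg x)
      (by positivity : (0:ℝ) ≤ 2 * ‖a‖) hconj
    have e1 : ‖x‖ ^ α / α ≤ X := by
      rw [hX]; exact div_le_self (rpow_nonneg (norm_nonneg x) α) (by linarith)
    have e2 : (2 * ‖a‖) ^ q / q ≤ 2 ^ q * ‖a‖ ^ q := by
      rw [mul_rpow (by norm_num) (norm_nonneg a)]
      exact div_le_self (mul_nonneg (rpow_nonneg (by norm_num) q)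
        (rpow_nonneg (norm_nonneg a) q)) (le_of_lt hqone)
    linarith
  -- bound on ‖a‖ ^ q
  have haq : ‖a‖ ^ q ≤ f + f * h ^ β + K * X + K * X * h ^ β := by
    have e : (f + K * X) * (1 + h ^ β) = f + f * h ^ β + K * X + K * X * h ^ β := by ring
    rw [← e]; exact hyp2
  have h2q0 : (0:ℝ) ≤ 2 ^ q := rpow_nonneg (by norm_num) q
  -- main chain
  have hmain : (p₀ - 1) * b ≤ (2 + K + 2 ^ q * (2 + 2 * K)) * S := by
    have step1 : (p₀ - 1) * b ≤ f + K * h ^ 2 + 2 * (‖a‖ * ‖x‖) := by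
      have := mul_nonneg hθ.le hX0
      linarith
    have step2 : 2 * (‖a‖ * ‖x‖) ≤ X + 2 ^ q * ‖a‖ ^ q := by
      have e : ‖x‖ * (2 * ‖a‖) = 2 * (‖a‖ * ‖x‖) := by ring
      rw [e] at hyoung; exact hyoung
    have step3 : 2 ^ q * ‖a‖ ^ q ≤ 2 ^ q * (f + f * h ^ β + K * X + K * X * h ^ β) :=
      mul_le_mul_of_nonneg_left haq h2q0
    calc (p₀ - 1) * b ≤ f + K * h ^ 2 + X
          + 2 ^ q * (f + f * h ^ β + K * X + K * X * h ^ β) := by linarith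
      _ = f + K * h ^ 2 + X + 2 ^ q * f + 2 ^ q * (f * h ^ β)
          + 2 ^ q * K * X + 2 ^ q * K * (X * h ^ β) := by ring
      _ ≤ S + K * S + S + 2 ^ q * S + 2 ^ q * S + 2 ^ q * K * S + 2 ^ q * K * S := by
          gcongr <;> first
            | exact hfS | exact hXS | exact hfhS | exact hh2S | exact hXhS
      _ = (2 + K + 2 ^ q * (2 + 2 * K)) * S := by ring
  have hp1 : (0:ℝ) < p₀ - 1 := by linarith
  rw [div_mul_eq_mul_div, le_div_iff₀ hp1]
  linarith [hmain]
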